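/- The map T₀ : L¹([0,1];ℝ) → C([0,1];ℝ) defined by (T₀ f)(x) = ∫_{[0,x]} f is a well-defined continuous linear map (C([0,1];ℝ) carrying the sup norm), it satisfies T₀(𝟙) = (x ↦ x) and T₀(γ(f,g)) = κ(T₀ f, T₀ g) for all f, g ∈ L¹([0,1];ℝ), and it is the unique continuous linear map L¹([0,1];ℝ) → C([0,1];ℝ) with these two properties. -/

import Mathlib

open MeasureTheory

/-- Lebesgue measure restricted to `[0,1]`. -/
noncomputable def μ01 : Measure ℝ := volume.restrict (Set.Icc 0 1)

/-- The space `L¹([0,1]; ℝ)`. -/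
abbrev L1 : Type := Lp ℝ 1 μ01

/-- `γ : L1 → L1 → L1` is the juxtaposition operation: `γ f g` agrees a.e. with
`x ↦ f (2x)` on `[0, 1/2)` and with `x ↦ g (2x − 1)` on `[1/2, 1]`. -/
def IsJux (γ : L1 → L1 → L1) : Prop :=
  ∀ f g : L1,
    (∀ᵐ x ∂μ01, x ∈ Set.Ico (0 : ℝ) (1 / 2) → γ f g x = f (2 * x)) ∧
    (∀ᵐ x ∂μ01, x ∈ Set.Icc (1 / 2 : ℝ) 1 → γ f g x = g (2 * x - 1))

/-- `one : L1` is the class of the constant function `1`. -/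
def IsOne (one : L1) : Prop := (one : ℝ → ℝ) =ᵐ[μ01] fun _ => (1 : ℝ)

/-- The juxtaposition `κ(F₁,F₂)` of two functions on `[0,1]`:
`κ(F₁,F₂)(x) = F₁(2x)/2` for `x < 1/2` and `(F₁(1) + F₂(2x−1))/2` for `x ≥ 1/2`. -/
noncomputable def kappaI (F₁ F₂ : Set.Icc (0:ℝ) 1 → ℝ) : Set.Icc (0:ℝ) 1 → ℝ :=
  fun x =>
    if h : (x : ℝ) < 1 / 2 then
      (1 / 2) * F₁ ⟨2 * (x : ℝ), ⟨by have := x.2.1; linarith, by linarith⟩⟩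
    else
      (1 / 2) * (F₁ ⟨1, by norm_num⟩ +
        F₂ ⟨2 * (x : ℝ) - 1, ⟨by have := not_lt.mp h; linarith,
          by have := x.2.2; linarith⟩⟩)

/-- the map `T₀ : L¹([0,1];ℝ) → C([0,1];ℝ)`,
`(T₀ f)(x) = ∫_{[0,x]} f`, is a well-defined continuous linear map; it satisfies
`T₀ 𝟙 = (x ↦ x)` and `T₀ (γ f g) = κ(T₀ f, T₀ g)`, and it is the unique
continuous linear map with these two properties. -/
instance : IsFiniteMeasure μ01 := by
  constructor
  rw [μ01, Measure.restrict_apply_univ, Real.volume_Icc]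
  norm_num

instance : NullSingletonClass μ01 := by rw [μ01]; infer_instance

lemma L1int (f : L1) : Integrable f μ01 := L1.integrable_coeFn f

-- claim A
lemma intA (f : ℝ → ℝ) {x : ℝ} (h0 : 0 ≤ x) (h1 : x ≤ 1) :
    ∫ t in Set.Icc 0 x, f t ∂μ01 = ∫ t in (0:ℝ)..x, f t := by
  rw [μ01, Measure.restrict_restrict measurableSet_Icc,
    Set.inter_eq_left.mpr (Set.Icc_subset_Icc le_rfl h1),
    intervalIntegral.integral_of_le h0, ← integral_Icc_eq_integral_Ioc]

noncomputable def prim (f : ℝ → ℝ) : Set.Icc (0:ℝ) 1 → ℝ :=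
  fun x => ∫ t in Set.Icc 0 (x:ℝ), f t ∂μ01

lemma prim_cont (f : ℝ → ℝ) (hf : Integrable f μ01) : Continuous (prim f) := by
  have h : ContinuousOn (fun x : ℝ => ∫ t in Set.Icc 0 x, f t ∂μ01) (Set.Icc 0 1) :=
    intervalIntegral.continuousOn_primitive_Icc hf.integrableOn
  exact h.restrict

noncomputable def primC (f : L1) : C(Set.Icc (0:ℝ) 1, ℝ) :=
  ⟨prim f, prim_cont _ (L1int f)⟩

lemma primC_congr {f : L1} {g : ℝ → ℝ} (h : (f : ℝ → ℝ) =ᵐ[μ01] g) (x : Set.Icc (0:ℝ) 1) :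
    primC f x = ∫ t in Set.Icc 0 (x:ℝ), g t ∂μ01 := by
  refine setIntegral_congr_ae measurableSet_Icc ?_
  filter_upwards [h] with t ht _ using ht

lemma primC_norm (f : L1) : ‖primC f‖ ≤ ‖f‖ := by
  refine ContinuousMap.norm_le _ (norm_nonneg f) |>.mpr fun x => ?_
  calc ‖primC f x‖ ≤ ∫ t in Set.Icc 0 (x:ℝ), ‖(f : ℝ → ℝ) t‖ ∂μ01 :=
        norm_integral_le_integral_norm _
    _ ≤ ∫ t, ‖(f : ℝ → ℝ) t‖ ∂μ01 :=
        setIntegral_le_integral (L1int f).norm (.of_forall fun t => norm_nonneg _)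
    _ = ‖f‖ := (L1.norm_eq_integral_norm f).symm

noncomputable def T0 : L1 →L[ℝ] C(Set.Icc (0:ℝ) 1, ℝ) := by
  refine LinearMap.mkContinuous
    { toFun := primC
      map_add' := ?_
      map_smul' := ?_ } 1 (fun f => by rw [one_mul]; exact primC_norm f)
  · intro f g
    ext x
    have h1 := primC_congr (Lp.coeFn_add f g) x
    simp only [Pi.add_apply] at h1
    show primC (f + g) x = primC f x + primC g x
    rw [h1, integral_add (L1int f).integrableOn (L1int g).integrableOn]
    rfl
  · intro c f
    ext x
    have h1 := primC_congr (Lp.coeFn_smul c f) x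
    simp only [Pi.smul_apply, smul_eq_mul] at h1
    show primC (c • f) x = c * primC f x
    rw [h1, MeasureTheory.integral_const_mul]
    rfl

lemma ae_Icc01 : ∀ᵐ t ∂μ01, t ∈ Set.Icc (0:ℝ) 1 := by
  rw [μ01]; exact ae_restrict_mem measurableSet_Icc

lemma pullback {c d : ℝ} (hc : c ≠ 0) {P : ℝ → Prop} (hP : ∀ᵐ t ∂μ01, P t) :
    ∀ᵐ x ∂μ01, P (c * x + d) ∨ ¬ (c * x + d) ∈ Set.Icc (0:ℝ) 1 := by
  set m : ℝ → ℝ := fun x => c * x + d with hm_def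
  have hm : Measurable m := (measurable_id.const_mul c).add_const d
  have hP' : volume ({t | ¬ P t} ∩ Set.Icc 0 1) = 0 := by
    have := hP
    rw [ae_iff, μ01, Measure.restrict_apply' measurableSet_Icc] at this
    exact this
  set N := toMeasurable volume ({t | ¬ P t} ∩ Set.Icc 0 1) with hN_def
  have hNmeas : MeasurableSet N := measurableSet_toMeasurable _ _
  have hNnull : volume N = 0 := by rw [hN_def, measure_toMeasurable]; exact hP'
  have hmap : Measure.map m volume = ENNReal.ofReal |c⁻¹| • volume := by
    have h2 : m = (fun x => x + d) ∘ (fun x => c * x) := rfl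
    rw [h2, ← Measure.map_map (measurable_add_const d) (by fun_prop : Measurable fun x : ℝ => c * x),
      Real.map_volume_mul_left hc, Measure.map_smul, map_add_right_eq_self]
  have hpre : volume (m ⁻¹' N) = 0 := by
    have := Measure.map_apply hm hNmeas (μ := volume)
    rw [hmap] at this
    simp only [Measure.smul_apply, smul_eq_mul, hNnull, mul_zero] at this
    exact this.symm
  have : μ01 (m ⁻¹' N) = 0 := by
    rw [μ01, Measure.restrict_apply' measurableSet_Icc]
    exact measure_mono_null Set.inter_subset_left hpre
  rw [ae_iff]
  refine measure_mono_null ?_ this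
  intro x hx
  simp only [Set.mem_setOf_eq, not_or, not_not] at hx
  exact subset_toMeasurable _ _ ⟨hx.1, hx.2⟩

lemma jux_ae {γ : L1 → L1 → L1} (hγ : IsJux γ) {a b : L1} {A B : ℝ → ℝ}
    (ha : (a : ℝ → ℝ) =ᵐ[μ01] A) (hb : (b : ℝ → ℝ) =ᵐ[μ01] B) :
    (γ a b : ℝ → ℝ) =ᵐ[μ01]
      fun x => if x < 1/2 then A (2*x) else B (2*x-1) := by
  have hA := pullback (c := 2) (d := 0) two_ne_zero ha
  have hB := pullback (c := 2) (d := -1) two_ne_zero hb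
  filter_upwards [(hγ a b).1, (hγ a b).2, ae_Icc01, hA, hB] with x h1 h2 hx hA' hB'
  by_cases hlt : x < 1/2
  · rw [if_pos hlt, h1 ⟨hx.1, hlt⟩]
    rcases hA' with h | h
    · simpa using h
    · exact absurd ⟨by simpa using mul_nonneg (by norm_num : (0:ℝ) ≤ 2) hx.1,
        by simp; linarith⟩ h
  · rw [if_neg hlt]
    have hx2 : x ∈ Set.Icc (1/2 : ℝ) 1 := ⟨not_lt.mp hlt, hx.2⟩
    rw [h2 hx2]
    rcases hB' with h | h
    · have e : 2 * x + -1 = 2 * x - 1 := by ring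
      rwa [e] at h
    · refine absurd ⟨by push_neg at hlt; linarith, by linarith [hx.2]⟩ h

lemma T0_apply (f : L1) (x : Set.Icc (0:ℝ) 1) :
    T0 f x = ∫ t in Set.Icc 0 (x:ℝ), (f : ℝ → ℝ) t ∂μ01 := rfl

lemma T0_one {one : L1} (hone : IsOne one) (x : Set.Icc (0:ℝ) 1) :
    T0 one x = (x : ℝ) := by
  rw [T0_apply]
  rw [setIntegral_congr_ae measurableSet_Icc
    (by filter_upwards [hone] with t ht _ using ht)]
  rw [setIntegral_const, measureReal_def, μ01, Measure.restrict_apply measurableSet_Icc,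
    Set.inter_eq_left.mpr (Set.Icc_subset_Icc le_rfl x.2.2), Real.volume_Icc]
  simp [ENNReal.toReal_ofReal x.2.1]

lemma T0_jux_lt {γ : L1 → L1 → L1} (hγ : IsJux γ) (f g : L1) {X : ℝ}
    (hx0 : 0 ≤ X) (hlt : X < 1/2) :
    ∫ t in Set.Icc 0 X, (γ f g : ℝ → ℝ) t ∂μ01
      = (1/2) * ∫ t in Set.Icc 0 (2*X), (f : ℝ → ℝ) t ∂μ01 := by
  have h1 : ∫ t in Set.Icc 0 X, (γ f g : ℝ → ℝ) t ∂μ01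
      = ∫ t in Set.Icc 0 X, (f : ℝ → ℝ) (2*t) ∂μ01 := by
    refine setIntegral_congr_ae measurableSet_Icc ?_
    filter_upwards [(hγ f g).1] with t ht hmem
    exact ht ⟨hmem.1, lt_of_le_of_lt hmem.2 hlt⟩
  rw [h1, intA _ hx0 (by linarith),
    intervalIntegral.integral_comp_mul_left _ (two_ne_zero (α := ℝ)),
    show (2:ℝ) * 0 = 0 by ring, intA _ (by linarith) (by linarith)]
  simp [smul_eq_mul]

lemma T0_jux_ge {γ : L1 → L1 → L1} (hγ : IsJux γ) (f g : L1) {X : ℝ}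
    (hx1 : X ≤ 1) (hge : 1/2 ≤ X) :
    ∫ t in Set.Icc 0 X, (γ f g : ℝ → ℝ) t ∂μ01
      = (1/2) * ((∫ t in Set.Icc 0 1, (f : ℝ → ℝ) t ∂μ01)
          + ∫ t in Set.Icc 0 (2*X-1), (g : ℝ → ℝ) t ∂μ01) := by
  have hsplit : Set.Icc (0:ℝ) X = Set.Icc 0 (1/2) ∪ Set.Ioc (1/2) X :=
    (Set.Icc_union_Ioc_eq_Icc (by norm_num) hge).symm
  rw [hsplit, setIntegral_union (Set.disjoint_left.mpr fun t ht1 ht2 => absurd ht1.2 (not_le.mpr ht2.1)) measurableSet_Ioc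
    (L1int (γ f g)).integrableOn (L1int (γ f g)).integrableOn]
  have hp1 : ∫ t in Set.Icc 0 (1/2:ℝ), (γ f g : ℝ → ℝ) t ∂μ01
      = (1/2) * ∫ t in Set.Icc 0 1, (f : ℝ → ℝ) t ∂μ01 := by
    have hne : ∀ᵐ t ∂(μ01.restrict (Set.Icc 0 (1/2:ℝ))), t ≠ 1/2 := by
      rw [ae_iff]
      simp only [ne_eq, not_not, Set.setOf_eq_eq_singleton]
      exact measure_singleton _
    have h1 : ∫ t in Set.Icc 0 (1/2:ℝ), (γ f g : ℝ → ℝ) t ∂μ01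
        = ∫ t in Set.Icc 0 (1/2:ℝ), (f : ℝ → ℝ) (2*t) ∂μ01 := by
      refine integral_congr_ae ?_
      filter_upwards [ae_restrict_of_ae (hγ f g).1,
        ae_restrict_mem measurableSet_Icc, hne] with t ht hmem htne
      exact ht ⟨hmem.1, lt_of_le_of_ne hmem.2 htne⟩
    rw [h1, intA _ (by norm_num) (by norm_num),
      intervalIntegral.integral_comp_mul_left _ (two_ne_zero (α := ℝ)),
      show (2:ℝ) * 0 = 0 by ring, show (2:ℝ) * (1/2) = 1 by ring,
      intA _ (by norm_num) (by norm_num)]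
    simp [smul_eq_mul]
  have hp2 : ∫ t in Set.Ioc (1/2:ℝ) X, (γ f g : ℝ → ℝ) t ∂μ01
      = (1/2) * ∫ t in Set.Icc 0 (2*X-1), (g : ℝ → ℝ) t ∂μ01 := by
    have h1 : ∫ t in Set.Ioc (1/2:ℝ) X, (γ f g : ℝ → ℝ) t ∂μ01
        = ∫ t in Set.Ioc (1/2:ℝ) X, (g : ℝ → ℝ) (2*t-1) ∂μ01 := by
      refine integral_congr_ae ?_
      filter_upwards [ae_restrict_of_ae (hγ f g).2,
        ae_restrict_mem measurableSet_Ioc] with t ht hmem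
      exact ht ⟨le_of_lt hmem.1, le_trans hmem.2 hx1⟩
    have h2 : μ01.restrict (Set.Ioc (1/2:ℝ) X) = volume.restrict (Set.Ioc (1/2:ℝ) X) := by
      rw [μ01, Measure.restrict_restrict measurableSet_Ioc,
        Set.inter_eq_left.mpr (fun t ht => Set.mem_Icc.mpr ⟨by linarith [ht.1], le_trans ht.2 hx1⟩)]
    rw [h1, h2, ← intervalIntegral.integral_of_le hge,
      intervalIntegral.integral_comp_mul_sub _ (two_ne_zero (α := ℝ)) 1,
      show (2:ℝ) * (1/2) - 1 = 0 by ring,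
      intA _ (by linarith) (by linarith)]
    simp [smul_eq_mul]
  rw [hp1, hp2]; ring

lemma T0_jux {γ : L1 → L1 → L1} (hγ : IsJux γ) (f g : L1) (x : Set.Icc (0:ℝ) 1) :
    T0 (γ f g) x = kappaI (T0 f) (T0 g) x := by
  rw [T0_apply, kappaI]
  by_cases hlt : (x:ℝ) < 1/2
  · rw [dif_pos hlt, T0_jux_lt hγ f g x.2.1 hlt, T0_apply]
  · rw [dif_neg hlt, T0_jux_ge hγ f g x.2.2 (not_lt.mp hlt), T0_apply, T0_apply]


def lf {n : ℕ} (c : Fin (2^(n+1)) → ℝ) : Fin (2^n) → ℝ :=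
  fun k => c ⟨k.1, by have := k.2; rw [pow_succ] at *; omega⟩

def rt {n : ℕ} (c : Fin (2^(n+1)) → ℝ) : Fin (2^n) → ℝ :=
  fun k => c ⟨k.1 + 2^n, by have := k.2; rw [pow_succ] at *; omega⟩

noncomputable def dy (one : L1) (γ : L1 → L1 → L1) : (n : ℕ) → (Fin (2^n) → ℝ) → L1
  | 0, c => c 0 • one
  | n+1, c => γ (dy one γ n (lf c)) (dy one γ n (rt c))

noncomputable def St : (n : ℕ) → (Fin (2^n) → ℝ) → ℝ → ℝ
  | 0, c => fun _ => c 0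
  | n+1, c => fun x => if x < 1/2 then St n (lf c) (2*x) else St n (rt c) (2*x-1)

lemma dy_ae {γ : L1 → L1 → L1} {one : L1} (hγ : IsJux γ) (hone : IsOne one) :
    ∀ (n : ℕ) (c : Fin (2^n) → ℝ), (dy one γ n c : ℝ → ℝ) =ᵐ[μ01] St n c
  | 0, c => by
      show ((c 0 • one : L1) : ℝ → ℝ) =ᵐ[μ01] _
      filter_upwards [Lp.coeFn_smul (c 0) one, hone] with t h1 h2
      rw [h1]
      simp only [Pi.smul_apply, h2, St, smul_eq_mul, mul_one]
  | n+1, c => by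
      have h := jux_ae hγ (dy_ae hγ hone n (lf c)) (dy_ae hγ hone n (rt c))
      exact h

noncomputable def sample (φ : ℝ → ℝ) (n : ℕ) : Fin (2^n) → ℝ :=
  fun k => φ ((k : ℕ) / (2^n : ℝ))

lemma lf_sample (φ : ℝ → ℝ) (n : ℕ) :
    lf (sample φ (n+1)) = sample (fun t => φ (t/2)) n := by
  funext k
  simp only [lf, sample]
  congr 1
  push_cast [pow_succ]
  field_simp

lemma rt_sample (φ : ℝ → ℝ) (n : ℕ) :
    rt (sample φ (n+1)) = sample (fun t => φ ((t+1)/2)) n := by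
  funext k
  simp only [rt, sample]
  congr 1
  push_cast [pow_succ]
  field_simp

lemma St_sample : ∀ (n : ℕ) (φ : ℝ → ℝ) (x : ℝ), x ∈ Set.Icc (0:ℝ) 1 →
    ∃ y ∈ Set.Icc (0:ℝ) 1, |x - y| ≤ (1/2)^n ∧ St n (sample φ n) x = φ y
  | 0, φ, x, hx => by
      refine ⟨0, by norm_num, ?_, by simp [St, sample]⟩
      rw [sub_zero, abs_of_nonneg hx.1]
      simpa using hx.2
  | n+1, φ, x, hx => by
      by_cases hlt : x < 1/2
      · obtain ⟨y, hy, hd, he⟩ := St_sample n (fun t => φ (t/2)) (2*x)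
          ⟨by linarith [hx.1], by linarith⟩
        refine ⟨y/2, ⟨by linarith [hy.1], by linarith [hy.2]⟩, ?_, ?_⟩
        · rw [show x - y/2 = (2*x - y)/2 by ring, abs_div, abs_of_nonneg (by norm_num : (0:ℝ) ≤ 2)]
          rw [show ((1:ℝ)/2)^(n+1) = (1/2)^n / 2 by ring]
          exact div_le_div_of_nonneg_right hd (by norm_num) |>.trans_eq rfl
        · show St (n+1) (sample φ (n+1)) x = φ (y/2)
          simp only [St]
          rw [if_pos hlt, lf_sample, he]
      · obtain ⟨y, hy, hd, he⟩ := St_sample n (fun t => φ ((t+1)/2)) (2*x-1)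
          ⟨by push_neg at hlt; linarith, by linarith [hx.2]⟩
        refine ⟨(y+1)/2, ⟨by linarith [hy.1], by linarith [hy.2]⟩, ?_, ?_⟩
        · rw [show x - (y+1)/2 = (2*x-1 - y)/2 by ring, abs_div,
            abs_of_nonneg (by norm_num : (0:ℝ) ≤ 2)]
          rw [show ((1:ℝ)/2)^(n+1) = (1/2)^n / 2 by ring]
          exact div_le_div_of_nonneg_right hd (by norm_num) |>.trans_eq rfl
        · show St (n+1) (sample φ (n+1)) x = φ ((y+1)/2)
          simp only [St]
          rw [if_neg hlt, rt_sample, he]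

instance : IsProbabilityMeasure μ01 := by
  constructor
  rw [μ01, Measure.restrict_apply_univ, Real.volume_Icc]
  norm_num

lemma approx {γ : L1 → L1 → L1} {one : L1} (hγ : IsJux γ) (hone : IsOne one)
    (f : L1) {ε : ℝ} (hε : 0 < ε) :
    ∃ (n : ℕ) (c : Fin (2^n) → ℝ), ‖f - dy one γ n c‖ ≤ ε := by
  obtain ⟨φ, hφ, hφmem⟩ := (Lp.memLp f).exists_boundedContinuous_eLpNorm_sub_le
      (p := 1) ENNReal.one_ne_top
      (ε := ENNReal.ofReal (ε/2)) (ENNReal.ofReal_pos.mpr (by positivity)).ne'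
  obtain ⟨δ, hδpos, hδ⟩ := Metric.uniformContinuousOn_iff.mp
      (isCompact_Icc.uniformContinuousOn_of_continuous φ.continuous.continuousOn)
      (ε/2) (by positivity)
  obtain ⟨n, hn⟩ := exists_pow_lt_of_lt_one hδpos (by norm_num : (1:ℝ)/2 < 1)
  refine ⟨n, sample φ n, ?_⟩
  set s : L1 := dy one γ n (sample φ n) with hs_def
  have hdyae := dy_ae hγ hone n (sample φ n)
  have hbound : ∀ᵐ t ∂μ01, ‖(φ t : ℝ) - St n (sample φ n) t‖ ≤ ε/2 := by
    filter_upwards [ae_Icc01] with t ht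
    obtain ⟨y, hy, hdist, heq⟩ := St_sample n φ t ht
    rw [heq, Real.norm_eq_abs, ← Real.dist_eq]
    exact le_of_lt (hδ t ht y hy (by rw [Real.dist_eq]; exact lt_of_le_of_lt hdist hn))
  have hmeas2 : AEStronglyMeasurable (fun t => (φ t : ℝ) - St n (sample φ n) t) μ01 :=
    φ.continuous.aestronglyMeasurable.sub
      ((Lp.aestronglyMeasurable s).congr hdyae)
  have h2 : eLpNorm (fun t => (φ t : ℝ) - St n (sample φ n) t) 1 μ01
      ≤ ENNReal.ofReal (ε/2) := by
    refine le_trans (eLpNorm_le_of_ae_bound hbound) ?_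
    simp [measure_univ]
  have h1 : eLpNorm ((f : ℝ → ℝ) - St n (sample φ n)) 1 μ01 ≤ ENNReal.ofReal ε := by
    have hdecomp : ((f : ℝ → ℝ) - St n (sample φ n))
        = (((f : ℝ → ℝ) - φ) + fun t => (φ t : ℝ) - St n (sample φ n) t) := by
      funext t; simp [Pi.sub_apply]
    rw [hdecomp]
    refine le_trans (eLpNorm_add_le
      ((Lp.aestronglyMeasurable f).sub φ.continuous.aestronglyMeasurable) hmeas2 le_rfl) ?_
    rw [show ENNReal.ofReal ε = ENNReal.ofReal (ε/2) + ENNReal.ofReal (ε/2) by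
      rw [← ENNReal.ofReal_add (by positivity) (by positivity)]; norm_num]
    exact add_le_add hφ h2
  have hcongr : eLpNorm ((f - s : L1) : ℝ → ℝ) 1 μ01
      = eLpNorm ((f : ℝ → ℝ) - St n (sample φ n)) 1 μ01 := by
    refine eLpNorm_congr_ae ?_
    filter_upwards [Lp.coeFn_sub f s, hdyae] with t h1' h2'
    rw [h1']
    simp [Pi.sub_apply, hs_def, h2']
  rw [Lp.norm_def, hcongr]
  exact ENNReal.toReal_le_of_le_ofReal (le_of_lt hε) h1


theorem stmt_10 (γ : L1 → L1 → L1) (hγ : IsJux γ)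
    (one : L1) (hone : IsOne one) :
    ∃ T₀ : L1 →L[ℝ] C(Set.Icc (0:ℝ) 1, ℝ),
      (∀ f : L1, ∀ x : Set.Icc (0:ℝ) 1,
        T₀ f x = ∫ t in Set.Icc 0 (x : ℝ), f t ∂μ01) ∧
      (∀ x : Set.Icc (0:ℝ) 1, T₀ one x = (x : ℝ)) ∧
      (∀ f g : L1, ∀ x : Set.Icc (0:ℝ) 1,
        T₀ (γ f g) x = kappaI (T₀ f) (T₀ g) x) ∧
      (∀ T : L1 →L[ℝ] C(Set.Icc (0:ℝ) 1, ℝ),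
        (∀ x : Set.Icc (0:ℝ) 1, T one x = (x : ℝ)) →
        (∀ f g : L1, ∀ x : Set.Icc (0:ℝ) 1,
          T (γ f g) x = kappaI (T f) (T g) x) →
        T = T₀) := by
  refine ⟨T0, fun f x => T0_apply f x, T0_one hone, T0_jux hγ, ?_⟩
  intro T hT1 hT2
  have hone' : T one = T0 one := ContinuousMap.ext fun x => by rw [hT1 x, T0_one hone x]
  have key : ∀ (n : ℕ) (c : Fin (2^n) → ℝ), T (dy one γ n c) = T0 (dy one γ n c) := by
    intro n
    induction n with
    | zero =>
      intro c
      show T (c 0 • one) = T0 (c 0 • one)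
      rw [_root_.map_smul, _root_.map_smul, hone']
    | succ n ih =>
      intro c
      show T (γ (dy one γ n (lf c)) (dy one γ n (rt c)))
          = T0 (γ (dy one γ n (lf c)) (dy one γ n (rt c)))
      refine ContinuousMap.ext fun x => ?_
      rw [hT2, T0_jux hγ, ih, ih]
  refine ContinuousLinearMap.ext fun f => ?_
  have hbound : ∀ ε : ℝ, 0 < ε → ‖T f - T0 f‖ ≤ (‖T‖ + ‖T0‖) * ε := by
    intro ε hε
    obtain ⟨n, c, hfc⟩ := approx hγ hone f hε
    set s := dy one γ n c with hs_def
    have heq : T f - T0 f = T (f - s) - T0 (f - s) := by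
      rw [map_sub, map_sub, key n c]; abel
    rw [heq]
    calc ‖T (f-s) - T0 (f-s)‖ ≤ ‖T (f-s)‖ + ‖T0 (f-s)‖ := norm_sub_le _ _
      _ ≤ ‖T‖ * ‖f-s‖ + ‖T0‖ * ‖f-s‖ :=
          add_le_add (T.le_opNorm _) (T0.le_opNorm _)
      _ = (‖T‖ + ‖T0‖) * ‖f-s‖ := by ring
      _ ≤ (‖T‖ + ‖T0‖) * ε :=
          mul_le_mul_of_nonneg_left hfc (by positivity)
  have hzero : ‖T f - T0 f‖ ≤ 0 := by
    refine le_of_forall_pos_le_add fun ε hε => ?_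
    have hpos : (0:ℝ) < ‖T‖ + ‖T0‖ + 1 := by positivity
    have h := hbound (ε / (‖T‖ + ‖T0‖ + 1)) (by positivity)
    refine le_trans h ?_
    rw [zero_add]
    calc (‖T‖ + ‖T0‖) * (ε / (‖T‖ + ‖T0‖ + 1))
        ≤ (‖T‖ + ‖T0‖ + 1) * (ε / (‖T‖ + ‖T0‖ + 1)) := by
          apply mul_le_mul_of_nonneg_right (by linarith) (by positivity)
      _ = ε := by field_simp
  exact sub_eq_zero.mp (norm_le_zero_iff.mp hzero)
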